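/- Let a, b be real numbers with a² + b² = 1/2. Then ∫_{−∞}^{+∞} e^{−y²/2} H_n(ay) dy = 0 whenever n is odd, and for n = 2p even, ∫_{−∞}^{+∞} e^{−y²/2} H_{2p}(ay) dy = (−2b²)^p · (2p)!/p! · √(2π). -/

import Mathlib

open Real Polynomial MeasureTheory Filter Set

-- pointwise bound
lemma pow_gauss_bound (n : ℕ) {b : ℝ} (hb : 0 < b) (y : ℝ) :
    ‖(y : ℝ) ^ n * Real.exp (-b * y ^ 2)‖
      ≤ (n.factorial * Real.exp (1 / (2 * b))) * Real.exp (-(b / 2) * y ^ 2) := by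
  rw [norm_mul, norm_pow, Real.norm_eq_abs, Real.norm_eq_abs, Real.abs_exp]
  have h1 : |y| ^ n ≤ n.factorial * Real.exp |y| := by
    have := Real.pow_div_factorial_le_exp |y| (abs_nonneg y) n
    rw [div_le_iff₀ (by positivity : (0:ℝ) < n.factorial)] at this
    linarith [this]
  calc |y| ^ n * Real.exp (-b * y ^ 2)
      ≤ (n.factorial * Real.exp |y|) * Real.exp (-b * y ^ 2) := by
        apply mul_le_mul_of_nonneg_right h1 (Real.exp_pos _).le
    _ = n.factorial * Real.exp (|y| + -b * y ^ 2) := by rw [mul_assoc, ← Real.exp_add]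
    _ ≤ n.factorial * Real.exp (1 / (2 * b) + -(b / 2) * y ^ 2) := by
        apply mul_le_mul_of_nonneg_left _ (by positivity)
        apply Real.exp_le_exp.2
        have h3 : b * (|y| - 1/b)^2 = b * |y|^2 - 2*|y| + 1/b := by
          field_simp; ring_nf
        have h4 : (0:ℝ) ≤ b * y^2 - 2*|y| + 1/b := by
          rw [← sq_abs y]; rw [← h3]; positivity
        have hb2 : 1 / (2*b) = (1/b)/2 := by field_simp
        linarith
    _ = (n.factorial * Real.exp (1 / (2 * b))) * Real.exp (-(b / 2) * y ^ 2) := by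
        rw [Real.exp_add]; ring

lemma integrable_pow_gauss (n : ℕ) {b : ℝ} (hb : 0 < b) :
    Integrable (fun y : ℝ => y ^ n * Real.exp (-b * y ^ 2)) := by
  apply Integrable.mono' (((integrable_exp_neg_mul_sq (half_pos hb)).const_mul
    (n.factorial * Real.exp (1 / (2 * b)))))
  · exact ((continuous_pow n).mul (((continuous_const.mul (continuous_pow 2)).rexp))).aestronglyMeasurable
  · exact Eventually.of_forall (pow_gauss_bound n hb)

lemma integrable_poly_gauss (P : ℝ[X]) :
    Integrable (fun y : ℝ => P.eval y * Real.exp (-(1/2 : ℝ) * y ^ 2)) := by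
  induction P using Polynomial.induction_on' with
  | add p q hp hq => simp only [Polynomial.eval_add, add_mul]; exact hp.add hq
  | monomial n c =>
      simpa [Polynomial.eval_monomial, mul_assoc] using
        (integrable_pow_gauss n (by norm_num : (0:ℝ) < 1/2)).const_mul c

lemma tendsto_poly_gauss_atTop (P : ℝ[X]) :
    Tendsto (fun y : ℝ => P.eval y * Real.exp (-(1/2 : ℝ) * y ^ 2)) atTop (nhds 0) ∧
    Tendsto (fun y : ℝ => P.eval y * Real.exp (-(1/2 : ℝ) * y ^ 2)) atBot (nhds 0) := by
  induction P using Polynomial.induction_on' with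
  | add p q hp hq =>
      exact ⟨by simpa [add_mul] using hp.1.add hq.1, by simpa [add_mul] using hp.2.add hq.2⟩
  | monomial n c =>
      have hexp : ∀ (l : Filter ℝ), Tendsto (fun y : ℝ => y ^ 2) l atTop →
          Tendsto (fun y : ℝ => (n.factorial * Real.exp (1 / (2 * (1/2 : ℝ)))) *
            Real.exp (-((1/2 : ℝ) / 2) * y ^ 2)) l (nhds 0) := by
        intro l hl
        rw [show (0:ℝ) = (n.factorial * Real.exp (1 / (2 * (1/2:ℝ)))) * 0 by ring]
        apply Tendsto.const_mul
        apply Real.tendsto_exp_atBot.comp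
        apply Tendsto.const_mul_atTop_of_neg (by norm_num) hl
      have key : ∀ (l : Filter ℝ), Tendsto (fun y : ℝ => y ^ 2) l atTop →
          Tendsto (fun y : ℝ => ((Polynomial.monomial n c).eval y) *
            Real.exp (-(1/2 : ℝ) * y ^ 2)) l (nhds 0) := by
        intro l hl
        have : Tendsto (fun y : ℝ => y ^ n * Real.exp (-(1/2:ℝ) * y ^ 2)) l (nhds 0) := by
          apply squeeze_zero_norm (fun y => pow_gauss_bound n (by norm_num) y) (hexp l hl)
        rw [show (0:ℝ) = c * 0 by ring]
        simpa [Polynomial.eval_monomial, mul_assoc] using this.const_mul c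
      have hsq : Tendsto (fun y : ℝ => y ^ 2) atTop atTop :=
        tendsto_pow_atTop (by norm_num)
      refine ⟨key _ hsq, key _ ?_⟩
      have : Tendsto (fun y : ℝ => (-y) ^ 2) atBot atTop :=
        hsq.comp tendsto_neg_atBot_atTop
      exact this.congr (fun y => by ring)

lemma derivative_hermite' (n : ℕ) :
    Polynomial.derivative (Polynomial.hermite (n+1))
      = Polynomial.C ((n:ℤ)+1) * Polynomial.hermite n := by
  induction n with
  | zero => simp [Polynomial.hermite_one, Polynomial.hermite_zero]
  | succ n ih =>
      rw [Polynomial.hermite_succ (n+1), Polynomial.derivative_sub,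
        Polynomial.derivative_mul, Polynomial.derivative_X, ih,
        Polynomial.derivative_mul, Polynomial.derivative_C,
        Polynomial.hermite_succ n]
      push_cast [Polynomial.C_add, Polynomial.C_1]
      ring

/-- real-coefficient Hermite polynomial -/
noncomputable def her (n : ℕ) : Polynomial ℝ :=
  (Polynomial.hermite n).map (Int.castRingHom ℝ)

lemma her_succ (n : ℕ) : her (n+1)
    = Polynomial.X * her n - Polynomial.derivative (her n) := by
  unfold her
  rw [Polynomial.hermite_succ]
  simp [Polynomial.derivative_map]

lemma derivative_her (n : ℕ) :
    Polynomial.derivative (her (n+1)) = Polynomial.C ((n:ℝ)+1) * her n := by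
  unfold her
  rw [Polynomial.derivative_map, derivative_hermite', Polynomial.map_mul,
    Polynomial.map_C]
  norm_num

lemma ibp (Q : Polynomial ℝ) :
    ∫ y : ℝ, (Q.derivative.eval y - y * Q.eval y) * Real.exp (-(1/2 : ℝ) * y ^ 2) = 0 := by
  set f : ℝ → ℝ := fun y => Q.eval y * Real.exp (-(1/2 : ℝ) * y ^ 2) with hfdef
  set f' : ℝ → ℝ := fun y =>
    (Q.derivative.eval y - y * Q.eval y) * Real.exp (-(1/2 : ℝ) * y ^ 2) with hf'def
  have hf : ∀ y, HasDerivAt f (f' y) y := by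
    intro y
    have h1 : HasDerivAt (fun y : ℝ => Real.exp (-(1/2 : ℝ) * y ^ 2))
        ((-(1/2 : ℝ) * (2 * y ^ 1)) * Real.exp (-(1/2 : ℝ) * y ^ 2)) y := by
      have := ((hasDerivAt_pow 2 y).const_mul (-(1/2 : ℝ))).exp
      convert this using 1
      ring
    have : HasDerivAt f (Q.derivative.eval y * Real.exp (-(1/2 : ℝ) * y ^ 2)
        + Q.eval y * ((-(1/2 : ℝ) * (2 * y ^ 1)) * Real.exp (-(1/2 : ℝ) * y ^ 2))) y :=
      (Q.hasDerivAt y).mul h1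
    convert this using 1
    simp [hf'def]
    ring
  have hint : Integrable f' := by
    have := integrable_poly_gauss (Q.derivative - Polynomial.X * Q)
    apply this.congr
    filter_upwards with y
    simp [hf'def]
  have htop : Tendsto f atTop (nhds 0) := (tendsto_poly_gauss_atTop Q).1
  have hbot : Tendsto f atBot (nhds 0) := (tendsto_poly_gauss_atTop Q).2
  have h1 : ∫ y in Set.Iic (0:ℝ), f' y = f 0 - 0 :=
    MeasureTheory.integral_Iic_of_hasDerivAt_of_tendsto' (fun x _ => hf x)
      hint.integrableOn hbot
  have h2 : ∫ y in Set.Ioi (0:ℝ), f' y = 0 - f 0 :=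
    MeasureTheory.integral_Ioi_of_hasDerivAt_of_tendsto' (fun x _ => hf x)
      hint.integrableOn htop
  have := intervalIntegral.integral_Iic_add_Ioi (b := (0:ℝ))
    hint.integrableOn hint.integrableOn
  rw [← this, h1, h2]
  ring

lemma integrable_comp_gauss (P : Polynomial ℝ) (c : ℝ) :
    Integrable (fun y : ℝ => P.eval (c * y) * Real.exp (-(1/2:ℝ) * y ^ 2)) := by
  have := integrable_poly_gauss (P.comp (Polynomial.C c * Polynomial.X))
  apply this.congr
  filter_upwards with y
  simp [Polynomial.eval_comp]

lemma integrable_mul_comp_gauss (P : Polynomial ℝ) (c : ℝ) :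
    Integrable (fun y : ℝ => y * P.eval (c * y) * Real.exp (-(1/2:ℝ) * y ^ 2)) := by
  have := integrable_poly_gauss (Polynomial.X * P.comp (Polynomial.C c * Polynomial.X))
  apply this.congr
  filter_upwards with y
  simp [Polynomial.eval_comp]

lemma ibp_scaled (c : ℝ) (R : Polynomial ℝ) :
    ∫ y : ℝ, (c * y) * R.eval (c * y) * Real.exp (-(1/2:ℝ) * y ^ 2)
      = c ^ 2 * ∫ y : ℝ,
          (Polynomial.derivative R).eval (c * y) * Real.exp (-(1/2:ℝ) * y ^ 2) := by
  set Q : Polynomial ℝ := R.comp (Polynomial.C c * Polynomial.X) with hQ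
  have hQe : ∀ y, Q.eval y = R.eval (c * y) := by
    intro y; simp [hQ, Polynomial.eval_comp]
  have hQd : ∀ y, Q.derivative.eval y
      = c * (Polynomial.derivative R).eval (c * y) := by
    intro y
    simp [hQ, Polynomial.derivative_comp, Polynomial.eval_comp]
    try ring
  have h0 := ibp Q
  have heq : (fun y : ℝ => (Q.derivative.eval y - y * Q.eval y) * Real.exp (-(1/2:ℝ) * y ^ 2))
      = fun y => c * ((Polynomial.derivative R).eval (c*y) * Real.exp (-(1/2:ℝ) * y ^ 2))
        - y * R.eval (c*y) * Real.exp (-(1/2:ℝ) * y ^ 2) := by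
    funext y; rw [hQd y, hQe y]; ring
  rw [heq, MeasureTheory.integral_sub ((integrable_comp_gauss _ c).const_mul c)
    (integrable_mul_comp_gauss R c), MeasureTheory.integral_const_mul, sub_eq_zero] at h0
  have h1 : (fun y : ℝ => (c * y) * R.eval (c*y) * Real.exp (-(1/2:ℝ) * y ^ 2))
      = fun y => c * (y * R.eval (c*y) * Real.exp (-(1/2:ℝ) * y ^ 2)) := by
    funext y; ring
  rw [h1, MeasureTheory.integral_const_mul, ← h0]
  ring

noncomputable def J (c : ℝ) (n : ℕ) : ℝ :=
  ∫ y : ℝ, (her n).eval (c * y) * Real.exp (-(1/2:ℝ) * y ^ 2)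

lemma J_succ (c : ℝ) (n : ℕ) : J c (n+1)
    = (c^2 - 1) * ∫ y : ℝ,
        (Polynomial.derivative (her n)).eval (c * y) * Real.exp (-(1/2:ℝ) * y ^ 2) := by
  unfold J
  have h : (fun y : ℝ => (her (n+1)).eval (c*y) * Real.exp (-(1/2:ℝ) * y ^ 2))
      = fun y => (c*y) * (her n).eval (c*y) * Real.exp (-(1/2:ℝ) * y ^ 2)
        - (Polynomial.derivative (her n)).eval (c*y) * Real.exp (-(1/2:ℝ) * y ^ 2) := by
    funext y; rw [her_succ]; simp; ring
  have hmul : Integrable (fun y : ℝ =>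
      (c*y) * (her n).eval (c*y) * Real.exp (-(1/2:ℝ) * y ^ 2)) := by
    have := (integrable_mul_comp_gauss (her n) c).const_mul c
    apply this.congr; filter_upwards with y; ring
  rw [h, MeasureTheory.integral_sub hmul (integrable_comp_gauss _ c), ibp_scaled]
  ring

lemma J_rec (c : ℝ) (n : ℕ) : J c (n+2) = ((n:ℝ)+1) * (c^2 - 1) * J c n := by
  rw [J_succ, derivative_her]
  have h : (fun y : ℝ => (Polynomial.C ((n:ℝ)+1) * her n).eval (c*y)
        * Real.exp (-(1/2:ℝ) * y ^ 2))
      = fun y => ((n:ℝ)+1) * ((her n).eval (c*y) * Real.exp (-(1/2:ℝ) * y ^ 2)) := by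
    funext y; simp; ring
  rw [h, MeasureTheory.integral_const_mul]
  unfold J
  ring

lemma J_zero (c : ℝ) : J c 0 = Real.sqrt (2 * Real.pi) := by
  unfold J
  have h : (fun y : ℝ => (her 0).eval (c*y) * Real.exp (-(1/2:ℝ) * y ^ 2))
      = fun y : ℝ => Real.exp (-(1/2:ℝ) * y ^ 2) := by
    funext y; simp [her, Polynomial.hermite_zero]
  rw [h, integral_gaussian (1/2 : ℝ), show (Real.pi / (1/2:ℝ)) = 2 * Real.pi by ring]

lemma J_one (c : ℝ) : J c 1 = 0 := by
  rw [show (1:ℕ) = 0 + 1 from rfl, J_succ]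
  have : Polynomial.derivative (her 0) = 0 := by
    simp [her, Polynomial.hermite_zero]
  rw [this]
  simp

lemma J_odd (c : ℝ) (m : ℕ) : J c (2*m+1) = 0 := by
  induction m with
  | zero => simpa using J_one c
  | succ m ih =>
      have : 2*(m+1)+1 = (2*m+1) + 2 := by ring
      rw [this, J_rec, ih]
      ring

lemma J_even (c : ℝ) (p : ℕ) :
    J c (2*p) = (c^2 - 1)^p * ((2*p).factorial / (p.factorial : ℝ)) / 2^p
      * Real.sqrt (2 * Real.pi) := by
  induction p with
  | zero => simpa using J_zero c
  | succ p ih =>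
      have h2 : 2*(p+1) = (2*p) + 2 := by ring
      have hfac : ((2*p+2).factorial : ℝ)
          = (2*(p:ℝ)+2) * ((2*(p:ℝ)+1) * (2*p).factorial) := by
        rw [show 2*p+2 = (2*p+1) + 1 by ring, Nat.factorial_succ,
          show 2*p+1 = (2*p) + 1 from rfl, Nat.factorial_succ]
        push_cast
        ring
      have hpfac : (((p+1)).factorial : ℝ) = ((p:ℝ)+1) * p.factorial := by
        rw [Nat.factorial_succ]; push_cast; ring
      rw [h2, J_rec, ih, hfac, hpfac]
      have hp0 : ((p.factorial : ℝ)) ≠ 0 := by exact_mod_cast Nat.factorial_ne_zero p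
      have hp1 : ((p:ℝ)+1) ≠ 0 := by positivity
      have hp2 : ((2:ℝ))^p ≠ 0 := by positivity
      field_simp
      push_cast
      ring

lemma her_eval (n : ℕ) (t : ℝ) :
    (her n).eval t = Polynomial.aeval t (Polynomial.hermite n) := by
  simp [her, Polynomial.eval_map, Polynomial.aeval_def]


/-- The Hermite polynomials `H_n(x) = (-1)^n e^{x²} (d/dx)^n e^{-x²}`. -/
noncomputable def hermiteH (n : ℕ) (x : ℝ) : ℝ :=
  (-1 : ℝ) ^ n * Real.exp (x ^ 2) * iteratedDeriv n (fun y => Real.exp (-y ^ 2)) x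

lemma hermiteH_eq (n : ℕ) (x : ℝ) :
    hermiteH n x = (Real.sqrt 2) ^ n * (her n).eval (Real.sqrt 2 * x) := by
  unfold hermiteH
  have hcd : ContDiff ℝ n (fun y : ℝ => Real.exp (-(y ^ 2 / 2))) :=
    (((contDiff_id.pow 2).div_const 2).neg).exp
  have hf : (fun y : ℝ => Real.exp (-y ^ 2))
      = fun y => (fun t : ℝ => Real.exp (-(t ^ 2 / 2))) (Real.sqrt 2 * y) := by
    funext y
    simp only [mul_pow, Real.sq_sqrt (by norm_num : (0:ℝ) ≤ 2)]
    norm_num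
  rw [hf, iteratedDeriv_comp_const_mul hcd, iteratedDeriv_eq_iterate]
  beta_reduce
  rw [Polynomial.deriv_gaussian_eq_hermite_mul_gaussian, her_eval]
  have h2 : -((Real.sqrt 2 * x) ^ 2 / 2) = -x ^ 2 := by
    simp only [mul_pow, Real.sq_sqrt (by norm_num : (0:ℝ) ≤ 2)]
    ring
  rw [h2]
  have h3 : Real.exp (x ^ 2) * Real.exp (-x ^ 2) = 1 := by
    rw [← Real.exp_add]; norm_num
  have h4 : ((-1:ℝ)) ^ n * ((-1:ℝ)) ^ n = 1 := by
    rw [← mul_pow]; norm_num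
  have h5 : (-1:ℝ) ^ n * Real.exp (x ^ 2) *
      (Real.sqrt 2 ^ n * ((-1:ℝ) ^ n
        * (Polynomial.aeval (Real.sqrt 2 * x)) (Polynomial.hermite n) * Real.exp (-x ^ 2)))
      = ((-1:ℝ) ^ n * (-1:ℝ) ^ n) * (Real.exp (x ^ 2) * Real.exp (-x ^ 2)) *
        (Real.sqrt 2 ^ n * (Polynomial.aeval (Real.sqrt 2 * x)) (Polynomial.hermite n)) := by
    ring
  rw [h5, h3, h4]
  ring

lemma integral_eq_J (c : ℝ) (a : ℝ) (hca : c = Real.sqrt 2 * a) (n : ℕ) :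
    (∫ y : ℝ, Real.exp (-y ^ 2 / 2) * hermiteH n (a * y))
      = (Real.sqrt 2) ^ n * J c n := by
  unfold J
  rw [← MeasureTheory.integral_const_mul]
  congr 1
  funext y
  rw [hermiteH_eq, hca]
  rw [show Real.sqrt 2 * a * y = Real.sqrt 2 * (a * y) by ring,
    show (-y ^ 2 / 2 : ℝ) = -(1/2:ℝ) * y ^ 2 by ring]
  ring

/-- If `a² + b² = 1/2` then `∫ e^{-y²/2} H_n(ay) dy` vanishes for odd `n`, and
equals `(-2b²)^p (2p)!/p! √(2π)` for `n = 2p` even. -/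
theorem integral_gaussian_hermite_at_zero (a b : ℝ) (hab : a ^ 2 + b ^ 2 = 1 / 2) :
    (∀ n : ℕ, Odd n → (∫ y : ℝ, Real.exp (-y ^ 2 / 2) * hermiteH n (a * y)) = 0) ∧
    (∀ p : ℕ, (∫ y : ℝ, Real.exp (-y ^ 2 / 2) * hermiteH (2 * p) (a * y))
      = (-2 * b ^ 2) ^ p * ((2 * p).factorial / (p.factorial : ℝ))
        * Real.sqrt (2 * Real.pi)) := by
  set c : ℝ := Real.sqrt 2 * a with hc
  have hc2 : c ^ 2 - 1 = -2 * b ^ 2 := by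
    rw [hc, mul_pow, Real.sq_sqrt (by norm_num : (0:ℝ) ≤ 2)]
    nlinarith [hab]
  constructor
  · rintro n ⟨m, rfl⟩
    rw [integral_eq_J c a hc (2*m+1), J_odd]
    ring
  · intro p
    rw [integral_eq_J c a hc (2*p), J_even, hc2]
    rw [show ((Real.sqrt 2) ^ (2*p) : ℝ) = 2 ^ p by
      rw [pow_mul, Real.sq_sqrt (by norm_num : (0:ℝ) ≤ 2)]]
    have h2p : ((2:ℝ)) ^ p ≠ 0 := by positivity
    field_simp
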